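/- Fix an integer m ≥ 1. The Dowling polynomials D_m(n;q) = Σ_{k=0}^n W_m(n,k)q^k, where W_m(n,k) are the Whitney numbers of the second kind defined by W_m(n,k) = (1+mk)·W_m(n-1,k) + W_m(n-1,k-1) for n ≥ k ≥ 1 with W_m(0,0) = 1 and W_m(n,k) = 0 for k > n or k < 0, are strongly q-log-convex: for all n ≥ m' ≥ 1, the polynomial D_m(m'-1;q)·D_m(n+1;q) − D_m(m';q)·D_m(n;q) has only nonnegative coefficients. -/

import Mathlib

open Polynomial

/-- The Whitney numbers of the second kind of the Dowling lattice over a group of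
order `m`: `W_m(0,0) = 1`, `W_m(n,k) = 0` for `k > n`, and
`W_m(n,k) = (1+mk)·W_m(n-1,k) + W_m(n-1,k-1)` for `n ≥ k ≥ 1`. -/
def whitney (m : ℕ) : ℕ → ℕ → ℕ
  | 0, 0 => 1
  | 0, _ + 1 => 0
  | n + 1, 0 => whitney m n 0
  | n + 1, k + 1 => (1 + m * (k + 1)) * whitney m n (k + 1) + whitney m n k

/-- The Dowling polynomial `D_m(n;q) = Σ_{k=0}^n W_m(n,k) q^k`. -/
noncomputable def dowlingPoly (m n : ℕ) : Polynomial ℝ :=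
  ∑ k ∈ Finset.range (n + 1), C ((whitney m n k : ℝ)) * X ^ k

/-! ### Auxiliary lemmas -/

lemma whitney_succ_succ (m n k : ℕ) :
    whitney m (n+1) (k+1) = (1 + m * (k + 1)) * whitney m n (k + 1) + whitney m n k := rfl

lemma whitney_eq_zero (m : ℕ) : ∀ {n k : ℕ}, n < k → whitney m n k = 0 := by
  intro n
  induction n with
  | zero =>
    intro k hk
    match k, hk with
    | k + 1, _ => rfl
  | succ n ih =>
    intro k hk
    match k, hk with
    | k + 1, hk =>
      have h1 : n < k + 1 := by omega
      have h2 : n < k := by omega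
      simp [whitney_succ_succ, ih h1, ih h2]

lemma one_le_whitney (m : ℕ) : ∀ {n k : ℕ}, k ≤ n → 1 ≤ whitney m n k := by
  intro n
  induction n with
  | zero =>
    intro k hk
    interval_cases k
    simp [whitney]
  | succ n ih =>
    intro k hk
    match k with
    | 0 => simpa [whitney] using ih (Nat.zero_le n)
    | k + 1 =>
      have := ih (show k ≤ n by omega)
      have h := whitney_succ_succ m n k
      omega

/-- Generalized log-concavity of the rows of the Whitney triangle. -/
lemma whitney_glc (m : ℕ) : ∀ n, ∀ i j : ℕ, i ≤ j →
    whitney m n i * whitney m n (j+1) ≤ whitney m n (i+1) * whitney m n j := by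
  intro n
  induction n with
  | zero =>
    intro i j _
    have : whitney m 0 (j+1) = 0 := rfl
    simp [this]
  | succ n ih =>
    intro i j hij
    match i, j with
    | 0, 0 => exact le_of_eq (mul_comm _ _)
    | 0, q + 1 =>
      have h1 : whitney m n 0 * whitney m n (q+2) ≤ whitney m n 1 * whitney m n (q+1) :=
        ih 0 (q+1) (by omega)
      have e0 : whitney m (n+1) 0 = whitney m n 0 := rfl
      rw [e0, whitney_succ_succ, whitney_succ_succ, whitney_succ_succ]
      have t : (1+m*(q+2)) * (whitney m n 0 * whitney m n (q+2))
          ≤ (1+m*(q+2)) * (whitney m n 1 * whitney m n (q+1)) := Nat.mul_le_mul_left _ h1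
      nlinarith [t, Nat.zero_le (m*m*(q+1) * (whitney m n 1 * whitney m n (q+1))),
        Nat.zero_le ((m*q+m) * (whitney m n 0 * whitney m n (q+1))),
        Nat.zero_le ((1+m) * (whitney m n 1 * whitney m n q)),
        Nat.zero_le (whitney m n 0 * whitney m n q)]
    | p + 1, q + 1 =>
      have hpq : p ≤ q := by omega
      have h1 : whitney m n (p+1) * whitney m n (q+2) ≤ whitney m n (p+2) * whitney m n (q+1) :=
        ih (p+1) (q+1) (by omega)
      have h2 : whitney m n p * whitney m n (q+2) ≤ whitney m n (p+1) * whitney m n (q+1) :=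
        ih p (q+1) (by omega)
      have h3 : whitney m n p * whitney m n (q+1) ≤ whitney m n (p+1) * whitney m n q :=
        ih p q hpq
      have h4 : whitney m n p * whitney m n (q+2) ≤ whitney m n (p+2) * whitney m n q := by
        rcases Nat.lt_or_ge p q with h | h
        · exact le_trans h2 (ih (p+1) q (by omega))
        · have : p = q := le_antisymm hpq h
          subst this
          exact le_of_eq (mul_comm _ _)
      obtain ⟨d, rfl⟩ : ∃ d, q = p + d := ⟨q - p, by omega⟩
      rw [whitney_succ_succ, whitney_succ_succ, whitney_succ_succ, whitney_succ_succ]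
      set a0 := whitney m n p
      set a1 := whitney m n (p+1)
      set a2 := whitney m n (p+2)
      set b0 := whitney m n (p+d)
      set b1 := whitney m n (p+d+1)
      set b2 := whitney m n (p+d+2)
      have t1 : (1+m*(p+1))*(1+m*(p+d+2)) * (a1*b2) ≤ (1+m*(p+1))*(1+m*(p+d+2)) * (a2*b1) :=
        Nat.mul_le_mul_left _ h1
      have hc : (1+m*(p+2))*(1+m*(p+d+1)) = (1+m*(p+1))*(1+m*(p+d+2)) + m*m*d := by ring
      have t1b : (1+m*(p+1))*(1+m*(p+d+2)) * (a2*b1) ≤ (1+m*(p+2))*(1+m*(p+d+1)) * (a2*b1) :=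
        Nat.mul_le_mul_right _ (by omega)
      have t2 : (1+m*(p+2)) * (a0*b2) ≤ (1+m*(p+2)) * (a2*b0) := Nat.mul_le_mul_left _ h4
      have t3 : (m*d) * (a0*b2) ≤ (m*d) * (a1*b1) := Nat.mul_le_mul_left _ h2
      nlinarith [t1.trans t1b, t2, t3, h3, Nat.zero_le (m*m*d*(a2*b1))]

/-- TP₂ for adjacent rows of the Whitney triangle. -/
lemma whitney_tp2_adj (m n : ℕ) : ∀ {i l : ℕ}, i ≤ l →
    whitney m n l * whitney m (n+1) i ≤ whitney m n i * whitney m (n+1) l := by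
  intro i l hil
  rcases Nat.eq_or_lt_of_le hil with rfl | hlt
  · exact le_rfl
  · obtain ⟨l, rfl⟩ : ∃ l', l = l' + 1 := ⟨l - 1, by omega⟩
    match i with
    | 0 =>
      have e0 : whitney m (n+1) 0 = whitney m n 0 := rfl
      rw [e0, whitney_succ_succ]
      have : whitney m n (l+1) * whitney m n 0 ≤ (1 + m*(l+1)) * whitney m n (l+1) * whitney m n 0 :=
        Nat.mul_le_mul_right _ (Nat.le_mul_of_pos_left _ (by omega))
      calc whitney m n (l+1) * whitney m n 0
          ≤ (1 + m*(l+1)) * whitney m n (l+1) * whitney m n 0 := this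
        _ ≤ whitney m n 0 * ((1 + m*(l+1)) * whitney m n (l+1) + whitney m n l) := by
            rw [mul_comm]; exact Nat.mul_le_mul_left _ (Nat.le_add_right _ _)
    | i + 1 =>
      rw [whitney_succ_succ, whitney_succ_succ]
      have hg : whitney m n i * whitney m n (l+1) ≤ whitney m n (i+1) * whitney m n l :=
        whitney_glc m n i l (by omega)
      have hcoef : (1 + m*(i+1)) ≤ (1 + m*(l+1)) := by
        have : i ≤ l := by omega
        nlinarith
      have t : (1 + m*(i+1)) * (whitney m n (l+1) * whitney m n (i+1))
          ≤ (1 + m*(l+1)) * (whitney m n (i+1) * whitney m n (l+1)) := by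
        rw [mul_comm (whitney m n (l+1))]
        exact Nat.mul_le_mul_right _ hcoef
      nlinarith [t, hg]

/-- TP₂ for any two rows of the Whitney triangle. -/
lemma whitney_tp2 (m : ℕ) {u t : ℕ} (hut : u ≤ t) : ∀ {i l : ℕ}, i ≤ l →
    whitney m t i * whitney m u l ≤ whitney m u i * whitney m t l := by
  obtain ⟨d, rfl⟩ : ∃ d, t = u + d := ⟨t - u, by omega⟩
  clear hut
  induction d with
  | zero => intro i l _; simp [Nat.mul_comm]
  | succ d ih =>
    intro i l hil
    rcases Nat.lt_or_ge (u + d) l with h | h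
    · have : whitney m u l = 0 := whitney_eq_zero m (by omega)
      simp [this]
    · have hbi : 1 ≤ whitney m (u+d) i := one_le_whitney m (by omega)
      have hbl : 1 ≤ whitney m (u+d) l := one_le_whitney m h
      have h1 : whitney m (u+d) i * whitney m u l ≤ whitney m u i * whitney m (u+d) l := ih hil
      have h2 : whitney m (u+d) l * whitney m (u+d+1) i ≤ whitney m (u+d) i * whitney m (u+d+1) l :=
        whitney_tp2_adj m (u+d) hil
      have key : (whitney m (u+d+1) i * whitney m u l) * (whitney m (u+d) i * whitney m (u+d) l)
          ≤ (whitney m u i * whitney m (u+d+1) l) * (whitney m (u+d) i * whitney m (u+d) l) := by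
        calc (whitney m (u+d+1) i * whitney m u l) * (whitney m (u+d) i * whitney m (u+d) l)
            = (whitney m (u+d) i * whitney m u l) * (whitney m (u+d) l * whitney m (u+d+1) i) := by
              ring
          _ ≤ (whitney m u i * whitney m (u+d) l) * (whitney m (u+d) i * whitney m (u+d+1) l) :=
              Nat.mul_le_mul h1 h2
          _ = (whitney m u i * whitney m (u+d+1) l) * (whitney m (u+d) i * whitney m (u+d) l) := by
              ring
      exact Nat.le_of_mul_le_mul_right key (by positivity)

/-- Integer-indexed Whitney numbers. -/
def w (m n : ℕ) (k : ℤ) : ℤ := if 0 ≤ k then (whitney m n k.toNat : ℤ) else 0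

lemma w_coe (m n : ℕ) (k : ℕ) : w m n (k : ℤ) = (whitney m n k : ℤ) := by
  simp [w]

lemma w_rec (m n : ℕ) (k : ℤ) : w m (n+1) k = (1 + m * k) * w m n k + w m n (k-1) := by
  rcases lt_trichotomy k 0 with h | rfl | h
  · have h1 : ¬ (0 ≤ k) := by omega
    have h2 : ¬ (0 ≤ k - 1) := by omega
    simp [w, h1, h2]
    exact fun hk => absurd hk (by omega)
  · have : whitney m (n+1) 0 = whitney m n 0 := rfl
    simp [w, this]
  · obtain ⟨j, rfl⟩ : ∃ j : ℕ, k = (j : ℤ) + 1 := ⟨(k-1).toNat, by omega⟩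
    have h1 : (0:ℤ) ≤ (j:ℤ) + 1 := by positivity
    have h2 : (0:ℤ) ≤ (j:ℤ) + 1 - 1 := by omega
    have e1 : ((j:ℤ)+1).toNat = j + 1 := by omega
    have e2 : ((j:ℤ)+1-1).toNat = j := by omega
    simp only [w, h1, h2, if_true, e1, e2]
    have : whitney m (n+1) (j+1) = (1 + m * (j + 1)) * whitney m n (j + 1) + whitney m n j := rfl
    rw [this]
    push_cast
    ring

lemma w_tp2 (m : ℕ) {u t : ℕ} (hut : u ≤ t) {x y : ℤ} (hxy : x ≤ y) :
    w m t x * w m u y ≤ w m u x * w m t y := by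
  rcases le_or_gt 0 x with hx | hx
  · obtain ⟨a, rfl⟩ : ∃ a : ℕ, x = (a : ℤ) := ⟨x.toNat, by omega⟩
    obtain ⟨b, rfl⟩ : ∃ b : ℕ, y = (b : ℤ) := ⟨y.toNat, by omega⟩
    rw [w_coe, w_coe, w_coe, w_coe]
    have hab : a ≤ b := by exact_mod_cast hxy
    exact_mod_cast whitney_tp2 m hut hab
  · have h1 : w m t x = 0 := by simp [w, not_le.mpr hx]
    have h2 : w m u x = 0 := by simp [w, not_le.mpr hx]
    rw [h1, h2]
    simp

/-- The key nonnegativity of the antisymmetrized coefficient sums. -/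
lemma key_sum (m s t j : ℕ) (hst : s ≤ t) :
    0 ≤ ∑ x ∈ Finset.range (j+1),
      (w m s x * w m (t+1) ((j:ℤ) - x) - w m (s+1) x * w m t ((j:ℤ) - x)) := by
  have hterm : ∀ x : ℕ,
      w m s x * w m (t+1) ((j:ℤ) - x) - w m (s+1) x * w m t ((j:ℤ) - x)
      = (m:ℤ) * ((j:ℤ) - 2*x) * (w m s x * w m t ((j:ℤ) - x))
        + ((fun y : ℕ => w m s ((y:ℤ)-1) * w m t ((j:ℤ) - y)) (x+1)
           - (fun y : ℕ => w m s ((y:ℤ)-1) * w m t ((j:ℤ) - y)) x) := by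
    intro x
    simp only []
    rw [w_rec m t ((j:ℤ) - x), w_rec m s (x:ℤ)]
    push_cast
    ring_nf
  rw [Finset.sum_congr rfl (fun x _ => hterm x), Finset.sum_add_distrib,
    Finset.sum_range_sub (fun y : ℕ => w m s ((y:ℤ)-1) * w m t ((j:ℤ) - y))]
  have e1 : w m t ((j:ℤ) - ((j+1 : ℕ):ℤ)) = 0 := by
    have : ¬ (0 ≤ (j:ℤ) - ((j+1:ℕ):ℤ)) := by push_cast; omega
    simp [w, this]
  have e2 : w m s (((0:ℕ):ℤ) - 1) = 0 := by norm_num [w]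
  simp only [e1, e2, mul_zero, zero_mul, sub_zero, add_zero]
  set g : ℕ → ℤ := fun x => (m:ℤ) * ((j:ℤ) - 2*x) * (w m s x * w m t ((j:ℤ) - x)) with hg
  have hrefl : ∑ x ∈ Finset.range (j+1), g (j + 1 - 1 - x) = ∑ x ∈ Finset.range (j+1), g x :=
    Finset.sum_range_reflect g (j+1)
  have h2S : 0 ≤ (∑ x ∈ Finset.range (j+1), g x) + (∑ x ∈ Finset.range (j+1), g x) := by
    nth_rewrite 1 [← hrefl]
    rw [← Finset.sum_add_distrib]
    apply Finset.sum_nonneg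
    intro x hx
    have hxj : x ≤ j := by
      simp only [Finset.mem_range] at hx; omega
    have hJ : j + 1 - 1 - x = j - x := by omega
    have hcast : ((j - x : ℕ) : ℤ) = (j:ℤ) - (x:ℤ) := by omega
    rw [hJ, hg]
    simp only [hcast]
    have harg : (j:ℤ) - ((j:ℤ) - (x:ℤ)) = (x:ℤ) := by ring
    rw [harg]
    rcases le_or_gt (2*x) j with h | h
    · have hfac : (0:ℤ) ≤ (m:ℤ) * ((j:ℤ) - 2*x) := by
        have : (0:ℤ) ≤ (j:ℤ) - 2*x := by omega
        positivity
      have htp := w_tp2 m hst (show (x:ℤ) ≤ (j:ℤ) - x by omega)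
      nlinarith [htp, hfac]
    · have hfac : (m:ℤ) * ((j:ℤ) - 2*x) ≤ 0 := by
        have h1 : (j:ℤ) - 2*x ≤ 0 := by omega
        exact mul_nonpos_of_nonneg_of_nonpos (by positivity) h1
      have htp := w_tp2 m hst (show ((j:ℤ) - x) ≤ (x:ℤ) by omega)
      nlinarith [htp, hfac]
  linarith

lemma coeff_dowling (m n k : ℕ) : (dowlingPoly m n).coeff k = (whitney m n k : ℝ) := by
  unfold dowlingPoly
  rw [Polynomial.finset_sum_coeff]
  simp only [Polynomial.coeff_C_mul, Polynomial.coeff_X_pow]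
  rw [Finset.sum_eq_single k]
  · simp
  · intro b _ hbk
    simp [Ne.symm hbk]
  · intro hk
    simp only [Finset.mem_range, not_lt] at hk
    have : whitney m n k = 0 := whitney_eq_zero m (by omega)
    simp [this]

/-- For each fixed `m ≥ 1`, the Dowling polynomials are strongly
`q`-log-convex: for all `n ≥ m' ≥ 1`, the polynomial
`D_m(m'-1;q)·D_m(n+1;q) − D_m(m';q)·D_m(n;q)` has nonnegative coefficients. -/
theorem dowlingPoly_strongly_q_log_convex (m : ℕ) (hm : 1 ≤ m) :
    ∀ m' n : ℕ, 1 ≤ m' → m' ≤ n →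
      ∀ i : ℕ,
        0 ≤ (dowlingPoly m (m' - 1) * dowlingPoly m (n + 1)
              - dowlingPoly m m' * dowlingPoly m n).coeff i := by
  intro m' n h1 h2 i
  obtain ⟨s, rfl⟩ : ∃ s, m' = s + 1 := ⟨m' - 1, by omega⟩
  have hsn : s ≤ n := by omega
  simp only [Nat.add_sub_cancel]
  rw [Polynomial.coeff_sub, Polynomial.coeff_mul, Polynomial.coeff_mul]
  rw [Finset.Nat.sum_antidiagonal_eq_sum_range_succ_mk,
    Finset.Nat.sum_antidiagonal_eq_sum_range_succ_mk]
  rw [← Finset.sum_sub_distrib]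
  have hpt : ∀ x ∈ Finset.range (i+1),
      (dowlingPoly m s).coeff x * (dowlingPoly m (n+1)).coeff (i - x)
        - (dowlingPoly m (s+1)).coeff x * (dowlingPoly m n).coeff (i - x)
      = ((w m s x * w m (n+1) ((i:ℤ) - x) - w m (s+1) x * w m n ((i:ℤ) - x) : ℤ) : ℝ) := by
    intro x hx
    have hxi : x ≤ i := by simp only [Finset.mem_range] at hx; omega
    have hc : ((i - x : ℕ) : ℤ) = (i:ℤ) - (x:ℤ) := by omega
    rw [coeff_dowling, coeff_dowling, coeff_dowling, coeff_dowling,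
      ← hc, w_coe, w_coe, w_coe, w_coe]
    push_cast
    ring
  rw [Finset.sum_congr rfl hpt, ← Int.cast_sum]
  exact_mod_cast key_sum m s n i hsn
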